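/- Under the Setup and Assumptions (A1), (A2), (A3), for any λ ≥ 0 the β-gradient of the Lyapunov function, D_β(β,θ) = ∫ ∇_β F(x,β) ∇g(F(x,β)) μ(dx) + ∫ ∇_β F(x,β)(∇g(F(x,β)) − ∇g(Ψ(x,θ))) μ(dx) + λ∫ ∇_β F(x,β)(F(x,β) − Ψ(x,θ)) μ(dx), is Lipschitz continuous on ℝ^{n_β} × ℝ^{n_θ} with constant L_{W_β} = L̄_f² L_{∇g} + L_g L̄_{∇f} + ( L̄_f² L_{∇g} + 2 L_g L̄_{∇f} + L̄_f L_{∇g} L̄_Ψ ) + λ ( L̄_f² + L̄_{∇f} C_f + L̄_{∇f} C_Ψ + L̄_f L̄_Ψ ); that is, ‖D_β(u,s) − D_β(v,t)‖ ≤ L_{W_β} ‖(u,s) − (v,t)‖ for all u, v ∈ ℝ^{n_β} and s, t ∈ ℝ^{n_θ}. -/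

import Mathlib

open MeasureTheory ProbabilityTheory RealInnerProductSpace

noncomputable section

/-- Euclidean space `ℝ^n`. -/
abbrev E (n : ℕ) : Type := EuclideanSpace ℝ (Fin n)

/-- The transposed Jacobian (gradient matrix) of `φ` at `x`, acting as a linear map. -/
noncomputable def tJac {n m : ℕ} (φ : E n → E m) (x : E n) : E m →L[ℝ] E n :=
  ContinuousLinearMap.adjoint (fderiv ℝ φ x)

/-- `F(x,β) = ∫ f(x,y,β) κ(x)(dy)`, the conditional expectation model. -/
noncomputable def condF {nX nY nb nf : ℕ} (κ : Kernel (E nX) (E nY))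
    (f : E nX → E nY → E nb → E nf) (x : E nX) (β : E nb) : E nf :=
  ∫ y, f x y β ∂(κ x)

/-- `∇_β F(x,β) = ∫ ∇_β f(x,y,β) κ(x)(dy)`, the transposed Jacobian of the
conditional expectation model. -/
noncomputable def DF {nX nY nb nf : ℕ} (κ : Kernel (E nX) (E nY))
    (f : E nX → E nY → E nb → E nf) (x : E nX) (β : E nb) : E nf →L[ℝ] E nb :=
  ∫ y, tJac (f x y) β ∂(κ x)

/-- `∇G(β) = ∫ ∇_β F(x,β) ∇g(F(x,β)) μ(dx)`. -/
noncomputable def gradG {nX nY nb nf : ℕ} (μ : Measure (E nX)) (κ : Kernel (E nX) (E nY))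
    (f : E nX → E nY → E nb → E nf) (g : E nf → ℝ) (β : E nb) : E nb :=
  ∫ x, DF κ f x β (gradient g (condF κ f x β)) ∂μ

/-- The β-gradient `D_β(β,θ)` of the Lyapunov function `W`. -/
noncomputable def Dbeta {nX nY nb nt nf : ℕ} (μ : Measure (E nX)) (κ : Kernel (E nX) (E nY))
    (f : E nX → E nY → E nb → E nf) (Ψ : E nX → E nt → E nf) (g : E nf → ℝ) (lam : ℝ)
    (β : E nb) (θ : E nt) : E nb :=
  gradG μ κ f g β
  + (∫ x, DF κ f x β (gradient g (condF κ f x β) - gradient g (Ψ x θ)) ∂μ)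
  + lam • ∫ x, DF κ f x β (condF κ f x β - Ψ x θ) ∂μ

namespace Statement13Aux

lemma norm_tJac_eq {n m : ℕ} (φ : E n → E m) (x : E n) : ‖tJac φ x‖ = ‖fderiv ℝ φ x‖ :=
  LinearIsometryEquiv.norm_map ContinuousLinearMap.adjoint _

lemma lip_of_tJac {n m : ℕ} {φ : E n → E m} (hφ : Differentiable ℝ φ) {L : ℝ}
    (hL : ∀ β, ‖tJac φ β‖ ≤ L) (p q : E n) : ‖φ p - φ q‖ ≤ L * ‖p - q‖ := by
  have := convex_univ.norm_image_sub_le_of_norm_fderiv_le (f := φ) (C := L)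
    (fun x _ => (hφ x)) (fun x _ => by rw [← norm_tJac_eq]; exact hL x)
    (Set.mem_univ q) (Set.mem_univ p)
  simpa using this

lemma grad_diff {k : ℕ} {g : E k → ℝ} (hg2 : ContDiff ℝ 2 g) : Differentiable ℝ (gradient g) := by
  have h1 : ContDiff ℝ 1 (fderiv ℝ g) := hg2.fderiv_right (by norm_num)
  have h2 : Differentiable ℝ (fderiv ℝ g) := h1.differentiable one_ne_zero
  have heq : gradient g = fun x => (InnerProductSpace.toDual ℝ (E k)).symm (fderiv ℝ g x) := rfl
  rw [heq]
  exact fun x => ((InnerProductSpace.toDual ℝ (E k)).symm.toContinuousLinearEquiv.toContinuousLinearMap.differentiable.comp h2) x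

lemma grad_lip {k : ℕ} {g : E k → ℝ} (hg2 : ContDiff ℝ 2 g) {Ldg : ℝ}
    (hgH : ∀ u, ‖fderiv ℝ (gradient g) u‖ ≤ Ldg) (p q : E k) :
    ‖gradient g p - gradient g q‖ ≤ Ldg * ‖p - q‖ :=
  convex_univ.norm_image_sub_le_of_norm_fderiv_le (fun x _ => (grad_diff hg2 x))
    (fun x _ => hgH x) (Set.mem_univ q) (Set.mem_univ p)

variable {α : Type*} [MeasurableSpace α]

lemma cs_int (μ : Measure α) {a b : α → ℝ}
    (ha : AEStronglyMeasurable a μ) (hb : AEStronglyMeasurable b μ)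
    (ha0 : ∀ᵐ x ∂μ, 0 ≤ a x) (hb0 : ∀ᵐ x ∂μ, 0 ≤ b x)
    (ha2 : Integrable (fun x => a x ^ 2) μ) (hb2 : Integrable (fun x => b x ^ 2) μ) :
    ∫ x, a x * b x ∂μ ≤ Real.sqrt (∫ x, a x ^ 2 ∂μ) * Real.sqrt (∫ x, b x ^ 2 ∂μ) := by
  have h22 : (2:ℝ).HolderConjugate 2 := Real.HolderConjugate.two_two
  have h2 : ENNReal.ofReal (2:ℝ) = 2 := by norm_num
  have hma : MemLp a (ENNReal.ofReal (2:ℝ)) μ := by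
    rw [h2]; exact (memLp_two_iff_integrable_sq ha).2 ha2
  have hmb : MemLp b (ENNReal.ofReal (2:ℝ)) μ := by
    rw [h2]; exact (memLp_two_iff_integrable_sq hb).2 hb2
  have h := integral_mul_le_Lp_mul_Lq_of_nonneg h22 ha0 hb0 hma hmb
  have hrw : ∀ (c : α → ℝ), ∫ x, c x ^ (2:ℝ) ∂μ = ∫ x, c x ^ 2 ∂μ := by
    intro c; apply integral_congr_ae; filter_upwards with x
    rw [show (2:ℝ) = ((2:ℕ):ℝ) by norm_num, Real.rpow_natCast]
  rw [hrw, hrw] at h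
  rw [Real.sqrt_eq_rpow, Real.sqrt_eq_rpow]
  exact h


lemma cs_le (μ : Measure α) {a b : α → ℝ} {A B : ℝ}
    (ha : AEStronglyMeasurable a μ) (hb : AEStronglyMeasurable b μ)
    (ha0 : ∀ᵐ x ∂μ, 0 ≤ a x) (hb0 : ∀ᵐ x ∂μ, 0 ≤ b x)
    (ha2 : Integrable (fun x => a x ^ 2) μ) (hb2 : Integrable (fun x => b x ^ 2) μ)
    (hA : ∫ x, a x ^ 2 ∂μ ≤ A ^ 2) (hB : ∫ x, b x ^ 2 ∂μ ≤ B ^ 2)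
    (hA0 : 0 ≤ A) (hB0 : 0 ≤ B) :
    ∫ x, a x * b x ∂μ ≤ A * B := by
  refine (cs_int μ ha hb ha0 hb0 ha2 hb2).trans ?_
  have h1 : Real.sqrt (∫ x, a x ^ 2 ∂μ) ≤ A := by
    calc Real.sqrt (∫ x, a x ^ 2 ∂μ) ≤ Real.sqrt (A ^ 2) := Real.sqrt_le_sqrt hA
    _ = A := Real.sqrt_sq hA0
  have h2 : Real.sqrt (∫ x, b x ^ 2 ∂μ) ≤ B := by
    calc Real.sqrt (∫ x, b x ^ 2 ∂μ) ≤ Real.sqrt (B ^ 2) := Real.sqrt_le_sqrt hB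
    _ = B := Real.sqrt_sq hB0
  exact mul_le_mul h1 h2 (Real.sqrt_nonneg _) hA0

lemma int_le_of_sq (μ : Measure α) [IsProbabilityMeasure μ] {a : α → ℝ} {A : ℝ}
    (ha : AEStronglyMeasurable a μ) (ha0 : ∀ᵐ x ∂μ, 0 ≤ a x)
    (ha2 : Integrable (fun x => a x ^ 2) μ) (hA : ∫ x, a x ^ 2 ∂μ ≤ A ^ 2) (hA0 : 0 ≤ A) :
    ∫ x, a x ∂μ ≤ A := by
  have hb2 : Integrable (fun _ : α => (1:ℝ) ^ 2) μ := by
    simpa using integrable_const (α := α) (μ := μ) (1:ℝ)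
  have hB : ∫ _ : α, (1:ℝ) ^ 2 ∂μ ≤ (1:ℝ) ^ 2 := by simp
  have h := cs_le μ (A := A) (B := 1) ha aestronglyMeasurable_const ha0
    (ae_of_all _ fun _ => zero_le_one) ha2 hb2 hA hB hA0 zero_le_one
  simpa using h

lemma integrable_of_sq {μ : Measure α} [IsFiniteMeasure μ] {h : α → ℝ}
    (hm : AEStronglyMeasurable h μ) (h0 : ∀ x, 0 ≤ h x)
    (hi : Integrable (fun x => h x ^ 2) μ) : Integrable h μ := by
  refine ((integrable_const (1:ℝ)).add hi).mono' hm (ae_of_all _ fun x => ?_)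
  rw [Real.norm_of_nonneg (h0 x)]
  simp only [Pi.add_apply]
  nlinarith [sq_nonneg (h x - 1)]

lemma integrable_mul_of_sq {μ : Measure α} {a w : α → ℝ}
    (ha : AEStronglyMeasurable a μ) (hw : AEStronglyMeasurable w μ)
    (ha2 : Integrable (fun x => a x ^ 2) μ) (hw2 : Integrable (fun x => w x ^ 2) μ) :
    Integrable (fun x => a x * w x) μ := by
  refine (ha2.add hw2).mono' (ha.mul hw) (ae_of_all _ fun x => ?_)
  rw [Real.norm_eq_abs, abs_mul]
  simp only [Pi.add_apply]
  nlinarith [sq_nonneg (|a x| - |w x|), abs_nonneg (a x), abs_nonneg (w x),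
    sq_abs (a x), sq_abs (w x)]

lemma clm_diff {m k : ℕ} (A A' : E m →L[ℝ] E k) (p p' : E m) :
    ‖A p - A' p'‖ ≤ ‖A - A'‖ * ‖p‖ + ‖A'‖ * ‖p - p'‖ := by
  have h : A p - A' p' = (A - A') p + A' (p - p') := by
    simp only [ContinuousLinearMap.sub_apply, map_sub]; abel
  rw [h]
  exact (norm_add_le _ _).trans (add_le_add ((A - A').le_opNorm p) (A'.le_opNorm _))

lemma aesm_apply {m k : ℕ} {μ : Measure α} {A : α → (E m →L[ℝ] E k)} {b : α → E m}
    (hA : AEStronglyMeasurable A μ) (hb : AEStronglyMeasurable b μ) :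
    AEStronglyMeasurable (fun x => A x (b x)) μ :=
  isBoundedBilinearMap_apply.continuous.comp_aestronglyMeasurable (hA.prodMk hb)

section Kernel

variable {n1 n2 : ℕ} {μ : Measure (E n1)} [SFinite μ] {κ : Kernel (E n1) (E n2)}
  [IsSFiniteKernel κ]

lemma aesm_int_kernel {G : Type*} [NormedAddCommGroup G] [NormedSpace ℝ G]
    {h : E n1 × E n2 → G} (hh : AEStronglyMeasurable h (μ ⊗ₘ κ)) :
    AEStronglyMeasurable (fun x => ∫ y, h (x, y) ∂κ x) μ := by
  rw [Measure.compProd] at hh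
  have := hh.integral_kernel_compProd
  simpa using this

lemma ae_aesm_slice {G : Type*} [TopologicalSpace G]
    {h : E n1 × E n2 → G} (hh : AEStronglyMeasurable h (μ ⊗ₘ κ)) :
    ∀ᵐ x ∂μ, AEStronglyMeasurable (fun y => h (x, y)) (κ x) := by
  rw [Measure.compProd] at hh
  have := hh.compProd_mk_left
  simpa using this

lemma decomp_nonneg {h : E n1 × E n2 → ℝ} (hm : Measurable h) (h0 : ∀ z, 0 ≤ h z)
    (hi : Integrable h (μ ⊗ₘ κ)) :
    (∀ᵐ x ∂μ, Integrable (fun y => h (x, y)) (κ x)) ∧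
      Integrable (fun x => ∫ y, h (x, y) ∂κ x) μ ∧
      ∫ x, ∫ y, h (x, y) ∂κ x ∂μ = ∫ z, h z ∂(μ ⊗ₘ κ) := by
  obtain ⟨h1, h2⟩ := (Measure.integrable_compProd_iff hi.1).1 hi
  have hnorm : (fun x => ∫ y, ‖h (x, y)‖ ∂κ x) = fun x => ∫ y, h (x, y) ∂κ x := by
    funext x
    exact integral_congr_ae (ae_of_all _ fun y => Real.norm_of_nonneg (h0 _))
  rw [hnorm] at h2
  exact ⟨h1, h2, (Measure.integral_compProd hi).symm⟩

end Kernel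

end Statement13Aux

set_option maxHeartbeats 1000000

open Statement13Aux in
/-- (β-part of the Appendix proof of Lemma 4.4 of the paper: Lipschitz
continuity of the β-gradient of the Lyapunov function, under (A1), (A2), (A3)),
with the Euclidean norm `√(‖u−v‖² + ‖s−t‖²)` on the product space. -/
theorem statement13 {nX nY nb nt nf : ℕ}
    (μ : Measure (E nX)) [IsProbabilityMeasure μ]
    (κ : Kernel (E nX) (E nY)) [IsMarkovKernel κ]
    (f : E nX → E nY → E nb → E nf)
    (hfm : Measurable (fun q : (E nX × E nY) × E nb => f q.1.1 q.1.2 q.2))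
    (hfd : ∀ x y, Differentiable ℝ (f x y))
    (hDfm : ∀ β : E nb,
      AEStronglyMeasurable (fun z : E nX × E nY => tJac (f z.1 z.2) β) (μ ⊗ₘ κ))
    (Ψ : E nX → E nt → E nf)
    (hΨm : Measurable (fun q : E nX × E nt => Ψ q.1 q.2))
    (hΨd : ∀ x, Differentiable ℝ (Ψ x))
    (hDΨm : ∀ θ : E nt, AEStronglyMeasurable (fun x => tJac (Ψ x) θ) μ)
    -- Assumption (A1)
    (g : E nf → ℝ) (Lg Ldg : ℝ) (hLg : 0 < Lg) (hLdg : 0 < Ldg)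
    (hgconv : ConvexOn ℝ Set.univ g) (hg2 : ContDiff ℝ 2 g)
    (hgB : ∀ u : E nf, ‖gradient g u‖ ≤ Lg)
    (hgH : ∀ u : E nf, ‖fderiv ℝ (gradient g) u‖ ≤ Ldg)
    -- Assumption (A2)
    (Lf Ldf : E nX × E nY → ℝ) (Lbf Lbdf Cf : ℝ)
    (hLfm : Measurable Lf) (hLdfm : Measurable Ldf)
    (hLf0 : ∀ z, 0 ≤ Lf z) (hLdf0 : ∀ z, 0 ≤ Ldf z)
    (hLbf : 0 < Lbf) (hLbdf : 0 < Lbdf) (hCf : 0 < Cf)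
    (hfB : ∀ x y (β : E nb), ‖tJac (f x y) β‖ ≤ Lf (x, y))
    (hfLip : ∀ x y (β β' : E nb),
      ‖tJac (f x y) β - tJac (f x y) β'‖ ≤ Ldf (x, y) * ‖β - β'‖)
    (hMomf : ∀ p ∈ ({2, 4} : Set ℕ),
      (Integrable (fun z => Lf z ^ p) (μ ⊗ₘ κ) ∧ ∫ z, Lf z ^ p ∂(μ ⊗ₘ κ) ≤ Lbf ^ p) ∧
      (∀ β : E nb, Integrable (fun z : E nX × E nY => ‖f z.1 z.2 β‖ ^ p) (μ ⊗ₘ κ) ∧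
          ∫ z : E nX × E nY, ‖f z.1 z.2 β‖ ^ p ∂(μ ⊗ₘ κ) ≤ Cf ^ p) ∧
      (Integrable (fun z => Ldf z ^ p) (μ ⊗ₘ κ) ∧ ∫ z, Ldf z ^ p ∂(μ ⊗ₘ κ) ≤ Lbdf ^ p))
    -- Assumption (A3)
    (LΨ LdΨ : E nX → ℝ) (LbΨ LbdΨ CΨ : ℝ)
    (hLΨm : Measurable LΨ) (hLdΨm : Measurable LdΨ)
    (hLΨ0 : ∀ x, 0 ≤ LΨ x) (hLdΨ0 : ∀ x, 0 ≤ LdΨ x)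
    (hLbΨ : 0 < LbΨ) (hLbdΨ : 0 < LbdΨ) (hCΨ : 0 < CΨ)
    (hΨB : ∀ x (θ : E nt), ‖tJac (Ψ x) θ‖ ≤ LΨ x)
    (hΨLip : ∀ x (θ θ' : E nt),
      ‖tJac (Ψ x) θ - tJac (Ψ x) θ'‖ ≤ LdΨ x * ‖θ - θ'‖)
    (hMomΨ : ∀ p ∈ ({2, 4} : Set ℕ),
      (Integrable (fun x => LΨ x ^ p) μ ∧ ∫ x, LΨ x ^ p ∂μ ≤ LbΨ ^ p) ∧
      (∀ θ : E nt, Integrable (fun x => ‖Ψ x θ‖ ^ p) μ ∧ ∫ x, ‖Ψ x θ‖ ^ p ∂μ ≤ CΨ ^ p) ∧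
      (Integrable (fun x => LdΨ x ^ p) μ ∧ ∫ x, LdΨ x ^ p ∂μ ≤ LbdΨ ^ p))

    (lam : ℝ) (hlam : 0 ≤ lam) :
    ∀ (u v : E nb) (s t : E nt),
      ‖Dbeta μ κ f Ψ g lam u s - Dbeta μ κ f Ψ g lam v t‖ ≤
        (Lbf ^ 2 * Ldg + Lg * Lbdf
          + (Lbf ^ 2 * Ldg + 2 * Lg * Lbdf + Lbf * Ldg * LbΨ)
          + lam * (Lbf ^ 2 + Lbdf * Cf + Lbdf * CΨ + Lbf * LbΨ)) *
        Real.sqrt (‖u - v‖ ^ 2 + ‖s - t‖ ^ 2) := by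
  intro u v s t
  -- moments at p = 2
  obtain ⟨⟨hLf2i, hLf2⟩, hfmom, ⟨hLdf2i, hLdf2⟩⟩ := hMomf 2 (by norm_num)
  obtain ⟨hfu2i, hfu2⟩ := hfmom u
  obtain ⟨hfv2i, hfv2⟩ := hfmom v
  obtain ⟨⟨hLΨ2i, hLΨ2⟩, hΨmom, -⟩ := hMomΨ 2 (by norm_num)
  obtain ⟨hΨs2i, hΨs2⟩ := hΨmom s
  obtain ⟨hΨt2i, hΨt2⟩ := hΨmom t
  -- measurability of slices
  have hfm_u : Measurable (fun z : E nX × E nY => f z.1 z.2 u) :=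
    hfm.comp (measurable_id.prodMk measurable_const)
  have hfm_v : Measurable (fun z : E nX × E nY => f z.1 z.2 v) :=
    hfm.comp (measurable_id.prodMk measurable_const)
  have hΨm_s : Measurable (fun x => Ψ x s) := hΨm.comp (measurable_id.prodMk measurable_const)
  have hΨm_t : Measurable (fun x => Ψ x t) := hΨm.comp (measurable_id.prodMk measurable_const)
  -- first-moment integrability on the product measure
  have hLfi : Integrable Lf (μ ⊗ₘ κ) :=
    integrable_of_sq hLfm.aestronglyMeasurable hLf0 hLf2i
  have hLdfi : Integrable Ldf (μ ⊗ₘ κ) :=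
    integrable_of_sq hLdfm.aestronglyMeasurable hLdf0 hLdf2i
  have hfui : Integrable (fun z : E nX × E nY => ‖f z.1 z.2 u‖) (μ ⊗ₘ κ) :=
    integrable_of_sq hfm_u.norm.aestronglyMeasurable (fun z => norm_nonneg _) hfu2i
  have hfvi : Integrable (fun z : E nX × E nY => ‖f z.1 z.2 v‖) (μ ⊗ₘ κ) :=
    integrable_of_sq hfm_v.norm.aestronglyMeasurable (fun z => norm_nonneg _) hfv2i
  -- kernel decompositions
  obtain ⟨aeLf, hΛi, hΛeq⟩ := decomp_nonneg hLfm hLf0 hLfi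
  obtain ⟨aeLf2, hQΛi, hQΛeq⟩ := decomp_nonneg (hLfm.pow_const 2) (fun z => sq_nonneg _) hLf2i
  obtain ⟨aeLdf, hΔi, hΔeq⟩ := decomp_nonneg hLdfm hLdf0 hLdfi
  obtain ⟨aeLdf2, hQΔi, hQΔeq⟩ := decomp_nonneg (hLdfm.pow_const 2) (fun z => sq_nonneg _) hLdf2i
  obtain ⟨aefu, hmui, -⟩ := decomp_nonneg hfm_u.norm (fun z => norm_nonneg _) hfui
  obtain ⟨aefu2, hqui, hqueq⟩ := decomp_nonneg (hfm_u.norm.pow_const 2) (fun z => sq_nonneg _) hfu2i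
  obtain ⟨aefv, hmvi, -⟩ := decomp_nonneg hfm_v.norm (fun z => norm_nonneg _) hfvi
  obtain ⟨aefv2, hqvi, hqveq⟩ := decomp_nonneg (hfm_v.norm.pow_const 2) (fun z => sq_nonneg _) hfv2i
  -- pointwise nonnegativity
  have hΛ0 : ∀ x, 0 ≤ ∫ y, Lf (x, y) ∂κ x := fun x => integral_nonneg fun y => hLf0 _
  have hΔ0 : ∀ x, 0 ≤ ∫ y, Ldf (x, y) ∂κ x := fun x => integral_nonneg fun y => hLdf0 _
  have hmu0 : ∀ x, 0 ≤ ∫ y, ‖f x y u‖ ∂κ x := fun x => integral_nonneg fun y => norm_nonneg _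
  have hmv0 : ∀ x, 0 ≤ ∫ y, ‖f x y v‖ ∂κ x := fun x => integral_nonneg fun y => norm_nonneg _
  -- measurability over μ
  have hΛm : AEStronglyMeasurable (fun x => ∫ y, Lf (x, y) ∂κ x) μ :=
    hLfm.stronglyMeasurable.integral_kernel_prod_right'.aestronglyMeasurable
  have hΔm : AEStronglyMeasurable (fun x => ∫ y, Ldf (x, y) ∂κ x) μ :=
    hLdfm.stronglyMeasurable.integral_kernel_prod_right'.aestronglyMeasurable
  have hmum : AEStronglyMeasurable (fun x => ∫ y, ‖f x y u‖ ∂κ x) μ :=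
    hfm_u.norm.stronglyMeasurable.integral_kernel_prod_right'.aestronglyMeasurable
  have hmvm : AEStronglyMeasurable (fun x => ∫ y, ‖f x y v‖ ∂κ x) μ :=
    hfm_v.norm.stronglyMeasurable.integral_kernel_prod_right'.aestronglyMeasurable
  -- Jensen-type a.e. bounds
  have aeΛsq : ∀ᵐ x ∂μ, (∫ y, Lf (x, y) ∂κ x) ^ 2 ≤ ∫ y, Lf (x, y) ^ 2 ∂κ x := by
    filter_upwards [aeLf2] with x h2
    have h0 : (0:ℝ) ≤ ∫ y, Lf (x, y) ^ 2 ∂κ x := integral_nonneg fun y => sq_nonneg _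
    have hle : ∫ y, Lf (x, y) ∂κ x ≤ Real.sqrt (∫ y, Lf (x, y) ^ 2 ∂κ x) :=
      int_le_of_sq (κ x) (hLfm.comp measurable_prodMk_left).aestronglyMeasurable
        (ae_of_all _ fun y => hLf0 _) h2 (by rw [Real.sq_sqrt h0]) (Real.sqrt_nonneg _)
    calc (∫ y, Lf (x, y) ∂κ x) ^ 2 ≤ Real.sqrt (∫ y, Lf (x, y) ^ 2 ∂κ x) ^ 2 :=
          pow_le_pow_left₀ (hΛ0 x) hle 2
      _ = ∫ y, Lf (x, y) ^ 2 ∂κ x := Real.sq_sqrt h0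
  have aeΔsq : ∀ᵐ x ∂μ, (∫ y, Ldf (x, y) ∂κ x) ^ 2 ≤ ∫ y, Ldf (x, y) ^ 2 ∂κ x := by
    filter_upwards [aeLdf2] with x h2
    have h0 : (0:ℝ) ≤ ∫ y, Ldf (x, y) ^ 2 ∂κ x := integral_nonneg fun y => sq_nonneg _
    have hle : ∫ y, Ldf (x, y) ∂κ x ≤ Real.sqrt (∫ y, Ldf (x, y) ^ 2 ∂κ x) :=
      int_le_of_sq (κ x) (hLdfm.comp measurable_prodMk_left).aestronglyMeasurable
        (ae_of_all _ fun y => hLdf0 _) h2 (by rw [Real.sq_sqrt h0]) (Real.sqrt_nonneg _)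
    calc (∫ y, Ldf (x, y) ∂κ x) ^ 2 ≤ Real.sqrt (∫ y, Ldf (x, y) ^ 2 ∂κ x) ^ 2 :=
          pow_le_pow_left₀ (hΔ0 x) hle 2
      _ = ∫ y, Ldf (x, y) ^ 2 ∂κ x := Real.sq_sqrt h0
  have aemusq : ∀ᵐ x ∂μ, (∫ y, ‖f x y u‖ ∂κ x) ^ 2 ≤ ∫ y, ‖f x y u‖ ^ 2 ∂κ x := by
    filter_upwards [aefu2] with x h2
    have h0 : (0:ℝ) ≤ ∫ y, ‖f x y u‖ ^ 2 ∂κ x := integral_nonneg fun y => sq_nonneg _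
    have hle : ∫ y, ‖f x y u‖ ∂κ x ≤ Real.sqrt (∫ y, ‖f x y u‖ ^ 2 ∂κ x) :=
      int_le_of_sq (κ x) (hfm_u.norm.comp measurable_prodMk_left).aestronglyMeasurable
        (ae_of_all _ fun y => norm_nonneg _) h2 (by rw [Real.sq_sqrt h0]) (Real.sqrt_nonneg _)
    calc (∫ y, ‖f x y u‖ ∂κ x) ^ 2 ≤ Real.sqrt (∫ y, ‖f x y u‖ ^ 2 ∂κ x) ^ 2 :=
          pow_le_pow_left₀ (hmu0 x) hle 2
      _ = ∫ y, ‖f x y u‖ ^ 2 ∂κ x := Real.sq_sqrt h0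
  have aemvsq : ∀ᵐ x ∂μ, (∫ y, ‖f x y v‖ ∂κ x) ^ 2 ≤ ∫ y, ‖f x y v‖ ^ 2 ∂κ x := by
    filter_upwards [aefv2] with x h2
    have h0 : (0:ℝ) ≤ ∫ y, ‖f x y v‖ ^ 2 ∂κ x := integral_nonneg fun y => sq_nonneg _
    have hle : ∫ y, ‖f x y v‖ ∂κ x ≤ Real.sqrt (∫ y, ‖f x y v‖ ^ 2 ∂κ x) :=
      int_le_of_sq (κ x) (hfm_v.norm.comp measurable_prodMk_left).aestronglyMeasurable
        (ae_of_all _ fun y => norm_nonneg _) h2 (by rw [Real.sq_sqrt h0]) (Real.sqrt_nonneg _)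
    calc (∫ y, ‖f x y v‖ ∂κ x) ^ 2 ≤ Real.sqrt (∫ y, ‖f x y v‖ ^ 2 ∂κ x) ^ 2 :=
          pow_le_pow_left₀ (hmv0 x) hle 2
      _ = ∫ y, ‖f x y v‖ ^ 2 ∂κ x := Real.sq_sqrt h0
  -- L² integrability over μ
  have hΛ2i : Integrable (fun x => (∫ y, Lf (x, y) ∂κ x) ^ 2) μ := by
    refine hQΛi.mono' (by simpa [pow_two, Pi.mul_def] using hΛm.mul hΛm) ?_
    filter_upwards [aeΛsq] with x hx
    rw [Real.norm_of_nonneg (sq_nonneg _)]; exact hx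
  have hΔ2i : Integrable (fun x => (∫ y, Ldf (x, y) ∂κ x) ^ 2) μ := by
    refine hQΔi.mono' (by simpa [pow_two, Pi.mul_def] using hΔm.mul hΔm) ?_
    filter_upwards [aeΔsq] with x hx
    rw [Real.norm_of_nonneg (sq_nonneg _)]; exact hx
  have hmu2i : Integrable (fun x => (∫ y, ‖f x y u‖ ∂κ x) ^ 2) μ := by
    refine hqui.mono' (by simpa [pow_two, Pi.mul_def] using hmum.mul hmum) ?_
    filter_upwards [aemusq] with x hx
    rw [Real.norm_of_nonneg (sq_nonneg _)]; exact hx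
  have hmv2i : Integrable (fun x => (∫ y, ‖f x y v‖ ∂κ x) ^ 2) μ := by
    refine hqvi.mono' (by simpa [pow_two, Pi.mul_def] using hmvm.mul hmvm) ?_
    filter_upwards [aemvsq] with x hx
    rw [Real.norm_of_nonneg (sq_nonneg _)]; exact hx
  -- integrated second-moment bounds
  have hΛ2le : ∫ x, (∫ y, Lf (x, y) ∂κ x) ^ 2 ∂μ ≤ Lbf ^ 2 :=
    le_trans (le_of_le_of_eq (integral_mono_ae hΛ2i hQΛi aeΛsq) hQΛeq) hLf2
  have hΔ2le : ∫ x, (∫ y, Ldf (x, y) ∂κ x) ^ 2 ∂μ ≤ Lbdf ^ 2 :=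
    le_trans (le_of_le_of_eq (integral_mono_ae hΔ2i hQΔi aeΔsq) hQΔeq) hLdf2
  have hmu2le : ∫ x, (∫ y, ‖f x y u‖ ∂κ x) ^ 2 ∂μ ≤ Cf ^ 2 :=
    le_trans (le_of_le_of_eq (integral_mono_ae hmu2i hqui aemusq) hqueq) hfu2
  have hmv2le : ∫ x, (∫ y, ‖f x y v‖ ∂κ x) ^ 2 ∂μ ≤ Cf ^ 2 :=
    le_trans (le_of_le_of_eq (integral_mono_ae hmv2i hqvi aemvsq) hqveq) hfv2
  have hΔle : ∫ x, (∫ y, Ldf (x, y) ∂κ x) ∂μ ≤ Lbdf :=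
    (le_of_eq hΔeq).trans
      (int_le_of_sq (μ ⊗ₘ κ) hLdfm.aestronglyMeasurable (ae_of_all _ hLdf0) hLdf2i hLdf2 hLbdf.le)
  -- Cauchy–Schwarz bounds over μ
  have hcsΛLΨ : ∫ x, (∫ y, Lf (x, y) ∂κ x) * LΨ x ∂μ ≤ Lbf * LbΨ :=
    cs_le μ hΛm hLΨm.aestronglyMeasurable (ae_of_all _ hΛ0) (ae_of_all _ hLΨ0)
      hΛ2i hLΨ2i hΛ2le hLΨ2 hLbf.le hLbΨ.le
  have hcsΔmu : ∫ x, (∫ y, Ldf (x, y) ∂κ x) * (∫ y, ‖f x y u‖ ∂κ x) ∂μ ≤ Lbdf * Cf :=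
    cs_le μ hΔm hmum (ae_of_all _ hΔ0) (ae_of_all _ hmu0) hΔ2i hmu2i hΔ2le hmu2le
      hLbdf.le hCf.le
  have hcsΔΨs : ∫ x, (∫ y, Ldf (x, y) ∂κ x) * ‖Ψ x s‖ ∂μ ≤ Lbdf * CΨ :=
    cs_le μ hΔm hΨm_s.norm.aestronglyMeasurable (ae_of_all _ hΔ0)
      (ae_of_all _ fun x => norm_nonneg _) hΔ2i hΨs2i hΔ2le hΨs2 hLbdf.le hCΨ.le
  -- global pointwise Lipschitz facts
  have hΨlip : ∀ x, ‖Ψ x s - Ψ x t‖ ≤ LΨ x * ‖s - t‖ :=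
    fun x => lip_of_tJac (hΨd x) (hΨB x) s t
  have hglip : ∀ p q : E nf, ‖gradient g p - gradient g q‖ ≤ Ldg * ‖p - q‖ :=
    grad_lip hg2 hgH
  -- slicewise a.e. measurability of the Jacobians
  have aeJu : ∀ᵐ x ∂μ, AEStronglyMeasurable (fun y => tJac (f x y) u) (κ x) :=
    ae_aesm_slice (hDfm u)
  have aeJv : ∀ᵐ x ∂μ, AEStronglyMeasurable (fun y => tJac (f x y) v) (κ x) :=
    ae_aesm_slice (hDfm v)
  -- main pointwise a.e. bounds
  have aeMain : ∀ᵐ x ∂μ,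
      ‖DF κ f x u‖ ≤ (∫ y, Lf (x, y) ∂κ x) ∧
      ‖DF κ f x v‖ ≤ (∫ y, Lf (x, y) ∂κ x) ∧
      ‖DF κ f x u - DF κ f x v‖ ≤ (∫ y, Ldf (x, y) ∂κ x) * ‖u - v‖ ∧
      ‖condF κ f x u - condF κ f x v‖ ≤ (∫ y, Lf (x, y) ∂κ x) * ‖u - v‖ ∧
      ‖condF κ f x u‖ ≤ (∫ y, ‖f x y u‖ ∂κ x) ∧
      ‖condF κ f x v‖ ≤ (∫ y, ‖f x y v‖ ∂κ x) := by
    filter_upwards [aeLf, aeLdf, aefu, aefv, aeJu, aeJv] with x hLfx hLdfx hfux hfvx hJu hJv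
    have hJui : Integrable (fun y => tJac (f x y) u) (κ x) :=
      hLfx.mono' hJu (ae_of_all _ fun y => hfB x y u)
    have hJvi : Integrable (fun y => tJac (f x y) v) (κ x) :=
      hLfx.mono' hJv (ae_of_all _ fun y => hfB x y v)
    have hfux' : Integrable (fun y => f x y u) (κ x) :=
      (integrable_norm_iff (hfm_u.comp measurable_prodMk_left).aestronglyMeasurable).1 hfux
    have hfvx' : Integrable (fun y => f x y v) (κ x) :=
      (integrable_norm_iff (hfm_v.comp measurable_prodMk_left).aestronglyMeasurable).1 hfvx
    refine ⟨?_, ?_, ?_, ?_, ?_, ?_⟩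
    · exact norm_integral_le_of_norm_le hLfx (ae_of_all _ fun y => hfB x y u)
    · exact norm_integral_le_of_norm_le hLfx (ae_of_all _ fun y => hfB x y v)
    · rw [show DF κ f x u - DF κ f x v = ∫ y, (tJac (f x y) u - tJac (f x y) v) ∂κ x from
        (integral_sub hJui hJvi).symm]
      calc ‖∫ y, (tJac (f x y) u - tJac (f x y) v) ∂κ x‖
          ≤ ∫ y, Ldf (x, y) * ‖u - v‖ ∂κ x :=
            norm_integral_le_of_norm_le (hLdfx.mul_const _) (ae_of_all _ fun y => hfLip x y u v)
        _ = (∫ y, Ldf (x, y) ∂κ x) * ‖u - v‖ := integral_mul_const _ _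
    · rw [show condF κ f x u - condF κ f x v = ∫ y, (f x y u - f x y v) ∂κ x from
        (integral_sub hfux' hfvx').symm]
      calc ‖∫ y, (f x y u - f x y v) ∂κ x‖
          ≤ ∫ y, Lf (x, y) * ‖u - v‖ ∂κ x :=
            norm_integral_le_of_norm_le (hLfx.mul_const _)
              (ae_of_all _ fun y => lip_of_tJac (hfd x y) (fun β => hfB x y β) u v)
        _ = (∫ y, Lf (x, y) ∂κ x) * ‖u - v‖ := integral_mul_const _ _
    · exact norm_integral_le_integral_norm _
    · exact norm_integral_le_integral_norm _
  -- measurability of the six integrands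
  have hgradc : Continuous (gradient g) := (grad_diff hg2).continuous
  have hDFuA : AEStronglyMeasurable (fun x => DF κ f x u) μ := aesm_int_kernel (hDfm u)
  have hDFvA : AEStronglyMeasurable (fun x => DF κ f x v) μ := aesm_int_kernel (hDfm v)
  have hFuA : AEStronglyMeasurable (fun x => condF κ f x u) μ :=
    aesm_int_kernel hfm_u.aestronglyMeasurable
  have hFvA : AEStronglyMeasurable (fun x => condF κ f x v) μ :=
    aesm_int_kernel hfm_v.aestronglyMeasurable
  have hΨsA : AEStronglyMeasurable (fun x => Ψ x s) μ := hΨm_s.aestronglyMeasurable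
  have hΨtA : AEStronglyMeasurable (fun x => Ψ x t) μ := hΨm_t.aestronglyMeasurable
  have h1uA : AEStronglyMeasurable (fun x => DF κ f x u (gradient g (condF κ f x u))) μ :=
    aesm_apply hDFuA (hgradc.comp_aestronglyMeasurable hFuA)
  have h1vA : AEStronglyMeasurable (fun x => DF κ f x v (gradient g (condF κ f x v))) μ :=
    aesm_apply hDFvA (hgradc.comp_aestronglyMeasurable hFvA)
  have h2usA : AEStronglyMeasurable
      (fun x => DF κ f x u (gradient g (condF κ f x u) - gradient g (Ψ x s))) μ :=
    aesm_apply hDFuA ((hgradc.comp_aestronglyMeasurable hFuA).sub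
      (hgradc.comp_aestronglyMeasurable hΨsA))
  have h2vtA : AEStronglyMeasurable
      (fun x => DF κ f x v (gradient g (condF κ f x v) - gradient g (Ψ x t))) μ :=
    aesm_apply hDFvA ((hgradc.comp_aestronglyMeasurable hFvA).sub
      (hgradc.comp_aestronglyMeasurable hΨtA))
  have h3usA : AEStronglyMeasurable (fun x => DF κ f x u (condF κ f x u - Ψ x s)) μ :=
    aesm_apply hDFuA (hFuA.sub hΨsA)
  have h3vtA : AEStronglyMeasurable (fun x => DF κ f x v (condF κ f x v - Ψ x t)) μ :=
    aesm_apply hDFvA (hFvA.sub hΨtA)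
  -- integrability of the six integrands
  have h1ui : Integrable (fun x => DF κ f x u (gradient g (condF κ f x u))) μ := by
    refine (hΛi.mul_const Lg).mono' h1uA ?_
    filter_upwards [aeMain] with x hx
    calc ‖DF κ f x u (gradient g (condF κ f x u))‖
        ≤ ‖DF κ f x u‖ * ‖gradient g (condF κ f x u)‖ := (DF κ f x u).le_opNorm _
      _ ≤ (∫ y, Lf (x, y) ∂κ x) * Lg := mul_le_mul hx.1 (hgB _) (norm_nonneg _) (hΛ0 x)
  have h1vi : Integrable (fun x => DF κ f x v (gradient g (condF κ f x v))) μ := by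
    refine (hΛi.mul_const Lg).mono' h1vA ?_
    filter_upwards [aeMain] with x hx
    calc ‖DF κ f x v (gradient g (condF κ f x v))‖
        ≤ ‖DF κ f x v‖ * ‖gradient g (condF κ f x v)‖ := (DF κ f x v).le_opNorm _
      _ ≤ (∫ y, Lf (x, y) ∂κ x) * Lg := mul_le_mul hx.2.1 (hgB _) (norm_nonneg _) (hΛ0 x)
  have hgrad2 : ∀ p q : E nf, ‖gradient g p - gradient g q‖ ≤ 2 * Lg := by
    intro p q
    calc ‖gradient g p - gradient g q‖ ≤ ‖gradient g p‖ + ‖gradient g q‖ := norm_sub_le _ _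
      _ ≤ Lg + Lg := add_le_add (hgB _) (hgB _)
      _ = 2 * Lg := by ring
  have h2usi : Integrable
      (fun x => DF κ f x u (gradient g (condF κ f x u) - gradient g (Ψ x s))) μ := by
    refine (hΛi.mul_const (2 * Lg)).mono' h2usA ?_
    filter_upwards [aeMain] with x hx
    calc ‖DF κ f x u (gradient g (condF κ f x u) - gradient g (Ψ x s))‖
        ≤ ‖DF κ f x u‖ * ‖gradient g (condF κ f x u) - gradient g (Ψ x s)‖ :=
          (DF κ f x u).le_opNorm _
      _ ≤ (∫ y, Lf (x, y) ∂κ x) * (2 * Lg) :=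
          mul_le_mul hx.1 (hgrad2 _ _) (norm_nonneg _) (hΛ0 x)
  have h2vti : Integrable
      (fun x => DF κ f x v (gradient g (condF κ f x v) - gradient g (Ψ x t))) μ := by
    refine (hΛi.mul_const (2 * Lg)).mono' h2vtA ?_
    filter_upwards [aeMain] with x hx
    calc ‖DF κ f x v (gradient g (condF κ f x v) - gradient g (Ψ x t))‖
        ≤ ‖DF κ f x v‖ * ‖gradient g (condF κ f x v) - gradient g (Ψ x t)‖ :=
          (DF κ f x v).le_opNorm _
      _ ≤ (∫ y, Lf (x, y) ∂κ x) * (2 * Lg) :=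
          mul_le_mul hx.2.1 (hgrad2 _ _) (norm_nonneg _) (hΛ0 x)
  have h3usi : Integrable (fun x => DF κ f x u (condF κ f x u - Ψ x s)) μ := by
    have hbnd : Integrable (fun x => (∫ y, Lf (x, y) ∂κ x) * (∫ y, ‖f x y u‖ ∂κ x)
        + (∫ y, Lf (x, y) ∂κ x) * ‖Ψ x s‖) μ :=
      (integrable_mul_of_sq hΛm hmum hΛ2i hmu2i).add
        (integrable_mul_of_sq hΛm hΨm_s.norm.aestronglyMeasurable hΛ2i hΨs2i)
    refine hbnd.mono' h3usA ?_
    filter_upwards [aeMain] with x hx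
    calc ‖DF κ f x u (condF κ f x u - Ψ x s)‖
        ≤ ‖DF κ f x u‖ * ‖condF κ f x u - Ψ x s‖ := (DF κ f x u).le_opNorm _
      _ ≤ (∫ y, Lf (x, y) ∂κ x) * ((∫ y, ‖f x y u‖ ∂κ x) + ‖Ψ x s‖) := by
          refine mul_le_mul hx.1 ?_ (norm_nonneg _) (hΛ0 x)
          exact (norm_sub_le _ _).trans (add_le_add hx.2.2.2.2.1 le_rfl)
      _ = (∫ y, Lf (x, y) ∂κ x) * (∫ y, ‖f x y u‖ ∂κ x)
          + (∫ y, Lf (x, y) ∂κ x) * ‖Ψ x s‖ := by ring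
  have h3vti : Integrable (fun x => DF κ f x v (condF κ f x v - Ψ x t)) μ := by
    have hbnd : Integrable (fun x => (∫ y, Lf (x, y) ∂κ x) * (∫ y, ‖f x y v‖ ∂κ x)
        + (∫ y, Lf (x, y) ∂κ x) * ‖Ψ x t‖) μ :=
      (integrable_mul_of_sq hΛm hmvm hΛ2i hmv2i).add
        (integrable_mul_of_sq hΛm hΨm_t.norm.aestronglyMeasurable hΛ2i hΨt2i)
    refine hbnd.mono' h3vtA ?_
    filter_upwards [aeMain] with x hx
    calc ‖DF κ f x v (condF κ f x v - Ψ x t)‖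
        ≤ ‖DF κ f x v‖ * ‖condF κ f x v - Ψ x t‖ := (DF κ f x v).le_opNorm _
      _ ≤ (∫ y, Lf (x, y) ∂κ x) * ((∫ y, ‖f x y v‖ ∂κ x) + ‖Ψ x t‖) := by
          refine mul_le_mul hx.2.1 ?_ (norm_nonneg _) (hΛ0 x)
          exact (norm_sub_le _ _).trans (add_le_add hx.2.2.2.2.2 le_rfl)
      _ = (∫ y, Lf (x, y) ∂κ x) * (∫ y, ‖f x y v‖ ∂κ x)
          + (∫ y, Lf (x, y) ∂κ x) * ‖Ψ x t‖ := by ring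
  -- Estimate 1
  have E1 : ‖(∫ x, DF κ f x u (gradient g (condF κ f x u)) ∂μ) -
      ∫ x, DF κ f x v (gradient g (condF κ f x v)) ∂μ‖ ≤
      (Lg * Lbdf + Ldg * Lbf ^ 2) * ‖u - v‖ := by
    rw [← integral_sub h1ui h1vi]
    have hbi : Integrable (fun x => (Lg * (∫ y, Ldf (x, y) ∂κ x)
        + Ldg * (∫ y, Lf (x, y) ∂κ x) ^ 2) * ‖u - v‖) μ :=
      ((hΔi.const_mul Lg).add (hΛ2i.const_mul Ldg)).mul_const _
    refine (norm_integral_le_of_norm_le hbi ?_).trans ?_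
    · filter_upwards [aeMain] with x hx
      obtain ⟨hx1, hx2, hx3, hx4, hx5, hx6⟩ := hx
      calc ‖DF κ f x u (gradient g (condF κ f x u)) - DF κ f x v (gradient g (condF κ f x v))‖
          ≤ ‖DF κ f x u - DF κ f x v‖ * ‖gradient g (condF κ f x u)‖ +
            ‖DF κ f x v‖ * ‖gradient g (condF κ f x u) - gradient g (condF κ f x v)‖ :=
            clm_diff _ _ _ _
        _ ≤ ((∫ y, Ldf (x, y) ∂κ x) * ‖u - v‖) * Lg +
            (∫ y, Lf (x, y) ∂κ x) * (Ldg * ((∫ y, Lf (x, y) ∂κ x) * ‖u - v‖)) := by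
            refine add_le_add (mul_le_mul hx3 (hgB _) (norm_nonneg _)
              (mul_nonneg (hΔ0 x) (norm_nonneg _)))
              (mul_le_mul hx2 ?_ (norm_nonneg _) (hΛ0 x))
            exact (hglip _ _).trans (mul_le_mul_of_nonneg_left hx4 hLdg.le)
        _ = (Lg * (∫ y, Ldf (x, y) ∂κ x) + Ldg * (∫ y, Lf (x, y) ∂κ x) ^ 2) * ‖u - v‖ := by
            ring
    · rw [integral_mul_const, integral_add (hΔi.const_mul Lg) (hΛ2i.const_mul Ldg),
        integral_const_mul, integral_const_mul]
      refine mul_le_mul_of_nonneg_right ?_ (norm_nonneg _)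
      have h1 := mul_le_mul_of_nonneg_left hΔle hLg.le
      have h2 := mul_le_mul_of_nonneg_left hΛ2le hLdg.le
      linarith
  -- Estimate 2
  have E2 : ‖(∫ x, DF κ f x u (gradient g (condF κ f x u) - gradient g (Ψ x s)) ∂μ) -
      ∫ x, DF κ f x v (gradient g (condF κ f x v) - gradient g (Ψ x t)) ∂μ‖ ≤
      (2 * Lg * Lbdf + Ldg * Lbf ^ 2) * ‖u - v‖ + (Ldg * (Lbf * LbΨ)) * ‖s - t‖ := by
    rw [← integral_sub h2usi h2vti]
    have hbi1 : Integrable (fun x => (2 * Lg * (∫ y, Ldf (x, y) ∂κ x)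
        + Ldg * (∫ y, Lf (x, y) ∂κ x) ^ 2) * ‖u - v‖) μ :=
      ((hΔi.const_mul (2 * Lg)).add (hΛ2i.const_mul Ldg)).mul_const _
    have hbi2 : Integrable (fun x => (Ldg * ((∫ y, Lf (x, y) ∂κ x) * LΨ x)) * ‖s - t‖) μ :=
      (((integrable_mul_of_sq hΛm hLΨm.aestronglyMeasurable hΛ2i hLΨ2i).const_mul
        Ldg).mul_const _)
    have hbi : Integrable (fun x => (2 * Lg * (∫ y, Ldf (x, y) ∂κ x)
        + Ldg * (∫ y, Lf (x, y) ∂κ x) ^ 2) * ‖u - v‖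
        + (Ldg * ((∫ y, Lf (x, y) ∂κ x) * LΨ x)) * ‖s - t‖) μ := hbi1.add hbi2
    refine (norm_integral_le_of_norm_le hbi ?_).trans ?_
    · filter_upwards [aeMain] with x hx
      obtain ⟨hx1, hx2, hx3, hx4, hx5, hx6⟩ := hx
      have hre : (gradient g (condF κ f x u) - gradient g (Ψ x s)) -
          (gradient g (condF κ f x v) - gradient g (Ψ x t)) =
          (gradient g (condF κ f x u) - gradient g (condF κ f x v)) -
          (gradient g (Ψ x s) - gradient g (Ψ x t)) := by abel
      calc ‖DF κ f x u (gradient g (condF κ f x u) - gradient g (Ψ x s)) -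
            DF κ f x v (gradient g (condF κ f x v) - gradient g (Ψ x t))‖
          ≤ ‖DF κ f x u - DF κ f x v‖ * ‖gradient g (condF κ f x u) - gradient g (Ψ x s)‖ +
            ‖DF κ f x v‖ * ‖(gradient g (condF κ f x u) - gradient g (Ψ x s)) -
              (gradient g (condF κ f x v) - gradient g (Ψ x t))‖ := clm_diff _ _ _ _
        _ ≤ ((∫ y, Ldf (x, y) ∂κ x) * ‖u - v‖) * (2 * Lg) +
            (∫ y, Lf (x, y) ∂κ x) * (Ldg * ((∫ y, Lf (x, y) ∂κ x) * ‖u - v‖)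
              + Ldg * (LΨ x * ‖s - t‖)) := by
            refine add_le_add (mul_le_mul hx3 (hgrad2 _ _) (norm_nonneg _)
              (mul_nonneg (hΔ0 x) (norm_nonneg _)))
              (mul_le_mul hx2 ?_ (norm_nonneg _) (hΛ0 x))
            rw [hre]
            refine (norm_sub_le _ _).trans (add_le_add ?_ ?_)
            · exact (hglip _ _).trans (mul_le_mul_of_nonneg_left hx4 hLdg.le)
            · exact (hglip _ _).trans (mul_le_mul_of_nonneg_left (hΨlip x) hLdg.le)
        _ = (2 * Lg * (∫ y, Ldf (x, y) ∂κ x) + Ldg * (∫ y, Lf (x, y) ∂κ x) ^ 2) * ‖u - v‖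
            + (Ldg * ((∫ y, Lf (x, y) ∂κ x) * LΨ x)) * ‖s - t‖ := by ring
    · rw [integral_add hbi1 hbi2,
        integral_mul_const, integral_mul_const,
        integral_add (hΔi.const_mul (2 * Lg)) (hΛ2i.const_mul Ldg),
        integral_const_mul, integral_const_mul, integral_const_mul]
      have h1 := mul_le_mul_of_nonneg_left hΔle (by positivity : (0:ℝ) ≤ 2 * Lg)
      have h2 := mul_le_mul_of_nonneg_left hΛ2le hLdg.le
      have h3 := mul_le_mul_of_nonneg_left hcsΛLΨ hLdg.le
      have h4 := mul_le_mul_of_nonneg_right (add_le_add h1 h2)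
        (norm_nonneg (u - v))
      have h5 := mul_le_mul_of_nonneg_right h3 (norm_nonneg (s - t))
      linarith
  -- Estimate 3
  have E3 : ‖(∫ x, DF κ f x u (condF κ f x u - Ψ x s) ∂μ) -
      ∫ x, DF κ f x v (condF κ f x v - Ψ x t) ∂μ‖ ≤
      (Lbdf * Cf + Lbdf * CΨ + Lbf ^ 2) * ‖u - v‖ + (Lbf * LbΨ) * ‖s - t‖ := by
    rw [← integral_sub h3usi h3vti]
    have hi1 : Integrable (fun x => (∫ y, Ldf (x, y) ∂κ x) * (∫ y, ‖f x y u‖ ∂κ x)) μ :=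
      integrable_mul_of_sq hΔm hmum hΔ2i hmu2i
    have hi2 : Integrable (fun x => (∫ y, Ldf (x, y) ∂κ x) * ‖Ψ x s‖) μ :=
      integrable_mul_of_sq hΔm hΨm_s.norm.aestronglyMeasurable hΔ2i hΨs2i
    have hi3 : Integrable (fun x => (∫ y, Lf (x, y) ∂κ x) * LΨ x) μ :=
      integrable_mul_of_sq hΛm hLΨm.aestronglyMeasurable hΛ2i hLΨ2i
    have hi12 : Integrable (fun x => (∫ y, Ldf (x, y) ∂κ x) * (∫ y, ‖f x y u‖ ∂κ x)
        + (∫ y, Ldf (x, y) ∂κ x) * ‖Ψ x s‖) μ := hi1.add hi2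
    have hbi1 : Integrable (fun x => ((∫ y, Ldf (x, y) ∂κ x) * (∫ y, ‖f x y u‖ ∂κ x)
        + (∫ y, Ldf (x, y) ∂κ x) * ‖Ψ x s‖ + (∫ y, Lf (x, y) ∂κ x) ^ 2) * ‖u - v‖) μ :=
      (hi12.add hΛ2i).mul_const _
    have hbi2 : Integrable (fun x => ((∫ y, Lf (x, y) ∂κ x) * LΨ x) * ‖s - t‖) μ :=
      hi3.mul_const _
    have hbi : Integrable (fun x => ((∫ y, Ldf (x, y) ∂κ x) * (∫ y, ‖f x y u‖ ∂κ x)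
        + (∫ y, Ldf (x, y) ∂κ x) * ‖Ψ x s‖ + (∫ y, Lf (x, y) ∂κ x) ^ 2) * ‖u - v‖
        + ((∫ y, Lf (x, y) ∂κ x) * LΨ x) * ‖s - t‖) μ := hbi1.add hbi2
    refine (norm_integral_le_of_norm_le hbi ?_).trans ?_
    · filter_upwards [aeMain] with x hx
      obtain ⟨hx1, hx2, hx3, hx4, hx5, hx6⟩ := hx
      have hre : (condF κ f x u - Ψ x s) - (condF κ f x v - Ψ x t) =
          (condF κ f x u - condF κ f x v) - (Ψ x s - Ψ x t) := by abel
      calc ‖DF κ f x u (condF κ f x u - Ψ x s) - DF κ f x v (condF κ f x v - Ψ x t)‖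
          ≤ ‖DF κ f x u - DF κ f x v‖ * ‖condF κ f x u - Ψ x s‖ +
            ‖DF κ f x v‖ * ‖(condF κ f x u - Ψ x s) - (condF κ f x v - Ψ x t)‖ :=
            clm_diff _ _ _ _
        _ ≤ ((∫ y, Ldf (x, y) ∂κ x) * ‖u - v‖) * ((∫ y, ‖f x y u‖ ∂κ x) + ‖Ψ x s‖) +
            (∫ y, Lf (x, y) ∂κ x) * ((∫ y, Lf (x, y) ∂κ x) * ‖u - v‖
              + LΨ x * ‖s - t‖) := by
            refine add_le_add (mul_le_mul hx3 ?_ (norm_nonneg _)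
              (mul_nonneg (hΔ0 x) (norm_nonneg _)))
              (mul_le_mul hx2 ?_ (norm_nonneg _) (hΛ0 x))
            · exact (norm_sub_le _ _).trans (add_le_add hx5 le_rfl)
            · rw [hre]
              exact (norm_sub_le _ _).trans (add_le_add hx4 (hΨlip x))
        _ = ((∫ y, Ldf (x, y) ∂κ x) * (∫ y, ‖f x y u‖ ∂κ x)
            + (∫ y, Ldf (x, y) ∂κ x) * ‖Ψ x s‖ + (∫ y, Lf (x, y) ∂κ x) ^ 2) * ‖u - v‖
            + ((∫ y, Lf (x, y) ∂κ x) * LΨ x) * ‖s - t‖ := by ring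
    · rw [integral_add hbi1 hbi2,
        integral_mul_const, integral_mul_const,
        integral_add hi12 hΛ2i, integral_add hi1 hi2]
      have h4 := mul_le_mul_of_nonneg_right
        (add_le_add (add_le_add hcsΔmu hcsΔΨs) hΛ2le) (norm_nonneg (u - v))
      have h5 := mul_le_mul_of_nonneg_right hcsΛLΨ (norm_nonneg (s - t))
      linarith
  -- final assembly
  have hsplit : Dbeta μ κ f Ψ g lam u s - Dbeta μ κ f Ψ g lam v t =
      ((∫ x, DF κ f x u (gradient g (condF κ f x u)) ∂μ) -
        ∫ x, DF κ f x v (gradient g (condF κ f x v)) ∂μ) +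
      (((∫ x, DF κ f x u (gradient g (condF κ f x u) - gradient g (Ψ x s)) ∂μ) -
        ∫ x, DF κ f x v (gradient g (condF κ f x v) - gradient g (Ψ x t)) ∂μ) +
       lam • ((∫ x, DF κ f x u (condF κ f x u - Ψ x s) ∂μ) -
        ∫ x, DF κ f x v (condF κ f x v - Ψ x t) ∂μ)) := by
    simp only [Dbeta, gradG, smul_sub]
    abel
  rw [hsplit]
  have har : ‖u - v‖ ≤ Real.sqrt (‖u - v‖ ^ 2 + ‖s - t‖ ^ 2) := by
    exact Real.le_sqrt_of_sq_le (by nlinarith [sq_nonneg ‖s - t‖])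
  have hbr : ‖s - t‖ ≤ Real.sqrt (‖u - v‖ ^ 2 + ‖s - t‖ ^ 2) := by
    exact Real.le_sqrt_of_sq_le (by nlinarith [sq_nonneg ‖u - v‖])
  have hca : (0:ℝ) ≤ (Lg * Lbdf + Ldg * Lbf ^ 2) + (2 * Lg * Lbdf + Ldg * Lbf ^ 2)
      + lam * (Lbdf * Cf + Lbdf * CΨ + Lbf ^ 2) := by
    have h1 : (0:ℝ) ≤ Lg * Lbdf := mul_nonneg hLg.le hLbdf.le
    have h2 : (0:ℝ) ≤ Ldg * Lbf ^ 2 := mul_nonneg hLdg.le (sq_nonneg _)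
    have h3 : (0:ℝ) ≤ lam * (Lbdf * Cf + Lbdf * CΨ + Lbf ^ 2) := by
      refine mul_nonneg hlam ?_
      have := mul_nonneg hLbdf.le hCf.le
      have := mul_nonneg hLbdf.le hCΨ.le
      have := sq_nonneg Lbf
      linarith
    linarith
  have hcb : (0:ℝ) ≤ Ldg * (Lbf * LbΨ) + lam * (Lbf * LbΨ) := by
    have h1 : (0:ℝ) ≤ Lbf * LbΨ := mul_nonneg hLbf.le hLbΨ.le
    have h2 := mul_nonneg hLdg.le h1
    have h3 := mul_nonneg hlam h1
    linarith
  calc ‖((∫ x, DF κ f x u (gradient g (condF κ f x u)) ∂μ) -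
        ∫ x, DF κ f x v (gradient g (condF κ f x v)) ∂μ) +
      (((∫ x, DF κ f x u (gradient g (condF κ f x u) - gradient g (Ψ x s)) ∂μ) -
        ∫ x, DF κ f x v (gradient g (condF κ f x v) - gradient g (Ψ x t)) ∂μ) +
       lam • ((∫ x, DF κ f x u (condF κ f x u - Ψ x s) ∂μ) -
        ∫ x, DF κ f x v (condF κ f x v - Ψ x t) ∂μ))‖
      ≤ ‖(∫ x, DF κ f x u (gradient g (condF κ f x u)) ∂μ) -
        ∫ x, DF κ f x v (gradient g (condF κ f x v)) ∂μ‖ +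
        (‖(∫ x, DF κ f x u (gradient g (condF κ f x u) - gradient g (Ψ x s)) ∂μ) -
          ∫ x, DF κ f x v (gradient g (condF κ f x v) - gradient g (Ψ x t)) ∂μ‖ +
         lam * ‖(∫ x, DF κ f x u (condF κ f x u - Ψ x s) ∂μ) -
          ∫ x, DF κ f x v (condF κ f x v - Ψ x t) ∂μ‖) := by
        refine (norm_add_le _ _).trans (add_le_add le_rfl ((norm_add_le _ _).trans
          (add_le_add le_rfl (le_of_eq ?_))))
        rw [norm_smul, Real.norm_of_nonneg hlam]
    _ ≤ (Lg * Lbdf + Ldg * Lbf ^ 2) * ‖u - v‖ +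
        (((2 * Lg * Lbdf + Ldg * Lbf ^ 2) * ‖u - v‖ + (Ldg * (Lbf * LbΨ)) * ‖s - t‖) +
         lam * ((Lbdf * Cf + Lbdf * CΨ + Lbf ^ 2) * ‖u - v‖ + (Lbf * LbΨ) * ‖s - t‖)) :=
        add_le_add E1 (add_le_add E2 (mul_le_mul_of_nonneg_left E3 hlam))
    _ = ((Lg * Lbdf + Ldg * Lbf ^ 2) + (2 * Lg * Lbdf + Ldg * Lbf ^ 2)
          + lam * (Lbdf * Cf + Lbdf * CΨ + Lbf ^ 2)) * ‖u - v‖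
        + (Ldg * (Lbf * LbΨ) + lam * (Lbf * LbΨ)) * ‖s - t‖ := by ring
    _ ≤ ((Lg * Lbdf + Ldg * Lbf ^ 2) + (2 * Lg * Lbdf + Ldg * Lbf ^ 2)
          + lam * (Lbdf * Cf + Lbdf * CΨ + Lbf ^ 2)) *
            Real.sqrt (‖u - v‖ ^ 2 + ‖s - t‖ ^ 2)
        + (Ldg * (Lbf * LbΨ) + lam * (Lbf * LbΨ)) *
            Real.sqrt (‖u - v‖ ^ 2 + ‖s - t‖ ^ 2) :=
        add_le_add (mul_le_mul_of_nonneg_left har hca) (mul_le_mul_of_nonneg_left hbr hcb)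
    _ = (Lbf ^ 2 * Ldg + Lg * Lbdf
          + (Lbf ^ 2 * Ldg + 2 * Lg * Lbdf + Lbf * Ldg * LbΨ)
          + lam * (Lbf ^ 2 + Lbdf * Cf + Lbdf * CΨ + Lbf * LbΨ)) *
        Real.sqrt (‖u - v‖ ^ 2 + ‖s - t‖ ^ 2) := by ring
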